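/- An ordered field F satisfies the least upper bound property if and only if it satisfies the Limit of Derivatives Property (if f is continuous at a, differentiable on a punctured neighborhood of a, and lim_{x→a} f'(x) exists, then f'(a) exists and equals lim_{x→a} f'(x)). -/

import Mathlib

open Filter Topology


/-- The derivative of `f : F → F` at `a` in the order topology. -/
def HasDerivO {F : Type*} [Field F] [LinearOrder F] [IsStrictOrderedRing F] [TopologicalSpace F]
    (f : F → F) (L a : F) : Prop :=
  Tendsto (fun x => (f x - f a) / (x - a)) (𝓝[≠] a) (𝓝 L)

section RealSide

/-- limit of derivatives property over ℝ, via MVT. -/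
lemma real_ldp (g g' : ℝ → ℝ) (b M : ℝ) (hc : ContinuousAt g b)
    (hd : ∃ V ∈ 𝓝 b, ∀ y ∈ V, y ≠ b → HasDerivAt g (g' y) y)
    (hl : Tendsto g' (𝓝[≠] b) (𝓝 M)) :
    Tendsto (fun x => (g x - g b) / (x - b)) (𝓝[≠] b) (𝓝 M) := by
  obtain ⟨V, hV, hVd⟩ := hd
  obtain ⟨δ₂, hδ₂, hball⟩ := Metric.mem_nhds_iff.1 hV
  rw [Metric.tendsto_nhdsWithin_nhds] at hl ⊢
  intro ε hε
  obtain ⟨δ₁, hδ₁, h1⟩ := hl ε hε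
  refine ⟨min δ₁ δ₂, lt_min hδ₁ hδ₂, ?_⟩
  intro x hx hdist
  have hxb : x ≠ b := hx
  have hd1 : dist x b < δ₁ := lt_of_lt_of_le hdist (min_le_left _ _)
  have hd2 : dist x b < δ₂ := lt_of_lt_of_le hdist (min_le_right _ _)
  have hmemV : ∀ y : ℝ, dist y b < δ₂ → y ∈ V := fun y hy => hball (Metric.mem_ball.2 hy)
  rcases lt_or_gt_of_ne hxb with hlt | hgt
  · -- x < b
    have habs : b - x < δ₂ := by
      rw [Real.dist_eq, abs_of_nonpos (by linarith)] at hd2; linarith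
    have hco : ContinuousOn g (Set.Icc x b) := by
      intro y hy
      rcases eq_or_lt_of_le hy.2 with rfl | hyb
      · exact hc.continuousWithinAt
      · have : y ∈ V := hmemV y (by rw [Real.dist_eq, abs_of_nonpos (by linarith)]; linarith [hy.1])
        exact ((hVd y this (ne_of_lt hyb)).continuousAt).continuousWithinAt
    have hdv : ∀ y ∈ Set.Ioo x b, HasDerivAt g (g' y) y := by
      intro y hy
      have : y ∈ V := hmemV y (by rw [Real.dist_eq, abs_of_nonpos (by linarith [hy.2])]; linarith [hy.1])
      exact hVd y this (ne_of_lt hy.2)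
    obtain ⟨cc, hcc, heq⟩ := exists_hasDerivAt_eq_slope g g' hlt hco hdv
    have hsl : (g x - g b) / (x - b) = g' cc := by
      rw [heq, ← neg_sub (g b) (g x), ← neg_sub b x, neg_div_neg_eq]
    rw [hsl]
    have hd1' : b - x < δ₁ := by
      rw [Real.dist_eq, abs_of_nonpos (by linarith)] at hd1; linarith
    exact h1 (Set.mem_compl_singleton_iff.2 (ne_of_lt hcc.2))
      (by rw [Real.dist_eq, abs_of_nonpos (by linarith [hcc.1, hcc.2])]; linarith [hcc.1])
  · -- b < x
    have habs : x - b < δ₂ := by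
      rw [Real.dist_eq, abs_of_nonneg (by linarith)] at hd2; linarith
    have hco : ContinuousOn g (Set.Icc b x) := by
      intro y hy
      rcases eq_or_lt_of_le hy.1 with rfl | hyb
      · exact hc.continuousWithinAt
      · have : y ∈ V := hmemV y (by rw [Real.dist_eq, abs_of_nonneg (by linarith)]; linarith [hy.2])
        exact ((hVd y this (ne_of_gt hyb)).continuousAt).continuousWithinAt
    have hdv : ∀ y ∈ Set.Ioo b x, HasDerivAt g (g' y) y := by
      intro y hy
      have : y ∈ V := hmemV y (by rw [Real.dist_eq, abs_of_nonneg (by linarith [hy.1])]; linarith [hy.2])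
      exact hVd y this (ne_of_gt hy.1)
    obtain ⟨cc, hcc, heq⟩ := exists_hasDerivAt_eq_slope g g' hgt hco hdv
    rw [← heq]
    have hd1' : x - b < δ₁ := by
      rw [Real.dist_eq, abs_of_nonneg (by linarith)] at hd1; linarith
    exact h1 (Set.mem_compl_singleton_iff.2 (ne_of_gt hcc.1))
      (by rw [Real.dist_eq, abs_of_nonneg (by linarith [hcc.1])]; linarith [hcc.2])

end RealSide

section Violation

variable {F : Type*} [Field F] [LinearOrder F] [IsStrictOrderedRing F] [TopologicalSpace F] [OrderTopology F]

/-- A locally constant "staircase" comparable to `x` on the right of `0` violates the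
limit-of-derivatives property. -/
lemma gap_violation (f : F → F) (c : F) (hc : 0 < c)
    (hub : ∀ x : F, 0 < x → c * x ≤ f x ∧ f x ≤ x)
    (hng : ∀ x : F, x ≤ 0 → f x = 0)
    (hloc : ∀ x : F, x ≠ 0 → ∀ᶠ y in 𝓝 x, f y = f x)
    (hldp : ∀ (f f' : F → F) (a L : F), ContinuousAt f a →
      (∃ U ∈ 𝓝 a, ∀ x ∈ U, x ≠ a → HasDerivO f (f' x) x) →
      Tendsto f' (𝓝[≠] a) (𝓝 L) → HasDerivO f L a) : False := by
  have hf0 : f 0 = 0 := hng 0 le_rfl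
  have hfnn : ∀ x : F, 0 ≤ f x := by
    intro x
    rcases le_or_gt x 0 with h | h
    · rw [hng x h]
    · exact le_trans (by positivity) (hub x h).1
  have hcont : ContinuousAt f 0 := by
    rw [ContinuousAt, hf0, tendsto_order]
    constructor
    · intro b hb
      exact Eventually.of_forall fun x => lt_of_lt_of_le hb (hfnn x)
    · intro b hb
      filter_upwards [Iio_mem_nhds hb] with x hx
      rcases le_or_gt x 0 with h | h
      · rw [hng x h]; exact hb
      · exact lt_of_le_of_lt (hub x h).2 hx
  have hdiff : ∃ U ∈ 𝓝 (0:F), ∀ x ∈ U, x ≠ (0:F) → HasDerivO f ((fun _ => (0:F)) x) x := by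
    refine ⟨Set.univ, univ_mem, fun x _ hx => ?_⟩
    have hev : ∀ᶠ y in 𝓝[≠] x, (f y - f x) / (y - x) = 0 := by
      filter_upwards [nhdsWithin_le_nhds (hloc x hx)] with y hy
      rw [hy, sub_self, zero_div]
    exact Tendsto.congr' (hev.mono fun y hy => hy.symm) tendsto_const_nhds
  have H : HasDerivO f 0 0 := hldp f (fun _ => 0) 0 0 hcont hdiff tendsto_const_nhds
  unfold HasDerivO at H
  have H' : Tendsto (fun x : F => (f x - f 0) / (x - 0)) (𝓝[>] (0:F)) (𝓝 0) :=
    H.mono_left (nhdsWithin_mono _ fun y hy => ne_of_gt hy)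
  have h1 : ∀ᶠ x in 𝓝[>] (0:F), (f x - f 0) / (x - 0) < c :=
    H'.eventually (Filter.Tendsto.eventually_lt_const hc tendsto_id)
  have h2 : ∀ᶠ x in 𝓝[>] (0:F), c ≤ (f x - f 0) / (x - 0) := by
    filter_upwards [self_mem_nhdsWithin] with x hx
    have hx0 : (0:F) < x := hx
    rw [hf0, sub_zero, sub_zero, le_div_iff₀ hx0]
    exact (hub x hx0).1
  obtain ⟨x, hx1, hx2⟩ := (h1.and h2).exists
  exact absurd (lt_of_le_of_lt hx2 hx1) (lt_irrefl c)

end Violation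

section CaseBounded

variable {F : Type*} [Field F] [LinearOrder F] [IsStrictOrderedRing F]

/-- The multiplicative archimedean class of `x`. -/
def cls (x : F) : Set F := {y | 0 < y ∧ ∃ n : ℕ, x ≤ n * y ∧ y ≤ n * x}

lemma mem_cls_self {x : F} (hx : 0 < x) : x ∈ cls x :=
  ⟨hx, 1, by simp, by simp⟩

lemma cls_eq {x y : F} (hy : y ∈ cls x) : cls y = cls x := by
  obtain ⟨hy0, n, hxn, hyn⟩ := hy
  have hn0 : (0:F) ≤ (n:F) := Nat.cast_nonneg n
  ext z
  constructor
  · rintro ⟨hz, m, hym, hzm⟩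
    have hm0 : (0:F) ≤ (m:F) := Nat.cast_nonneg m
    refine ⟨hz, n * m, ?_, ?_⟩
    · push_cast
      calc x ≤ n * y := hxn
        _ ≤ n * (m * z) := by
          apply mul_le_mul_of_nonneg_left hym hn0
        _ = (n:F) * m * z := by ring
    · push_cast
      calc z ≤ m * y := hzm
        _ ≤ m * (n * x) := mul_le_mul_of_nonneg_left hyn hm0
        _ = (n:F) * m * x := by ring
  · rintro ⟨hz, m, hxm, hzm⟩
    have hm0 : (0:F) ≤ (m:F) := Nat.cast_nonneg m
    refine ⟨hz, n * m, ?_, ?_⟩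
    · push_cast
      calc y ≤ n * x := hyn
        _ ≤ n * (m * z) := mul_le_mul_of_nonneg_left hxm hn0
        _ = (n:F) * m * z := by ring
    · push_cast
      calc z ≤ m * x := hzm
        _ ≤ m * (n * y) := mul_le_mul_of_nonneg_left hxn hm0
        _ = (n:F) * m * y := by ring

open Classical in
/-- A choice of representative from a set. -/
noncomputable def srep (S : Set F) : F := if h : S.Nonempty then h.some else 0

lemma srep_mem {S : Set F} (h : S.Nonempty) : srep S ∈ S := by
  rw [srep, dif_pos h]; exact h.some_mem

variable [TopologicalSpace F] [OrderTopology F]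

lemma case_bounded (M : F) (hM : ∀ n : ℕ, (n : F) ≤ M)
    (hldp : ∀ (f f' : F → F) (a L : F), ContinuousAt f a →
      (∃ U ∈ 𝓝 a, ∀ x ∈ U, x ≠ a → HasDerivO f (f' x) x) →
      Tendsto f' (𝓝[≠] a) (𝓝 L) → HasDerivO f L a) : False := by
  have hM1 : (1:F) ≤ M := by simpa using hM 1
  have hM0 : (0:F) < M := lt_of_lt_of_le one_pos hM1
  set f : F → F := fun x => if 0 < x then srep (cls x) / M else 0 with hf
  have hfpos : ∀ x : F, 0 < x → f x = srep (cls x) / M := by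
    intro x hx; rw [hf]; simp [hx]
  -- representative bounds
  have hrep : ∀ x : F, 0 < x → 0 < srep (cls x) ∧ x ≤ M * srep (cls x) ∧ srep (cls x) ≤ M * x := by
    intro x hx
    obtain ⟨hr0, n, h1, h2⟩ := srep_mem ⟨x, mem_cls_self hx⟩
    have hnM : (n:F) ≤ M := hM n
    refine ⟨hr0, ?_, ?_⟩
    · calc x ≤ n * srep (cls x) := h1
        _ ≤ M * srep (cls x) := mul_le_mul_of_nonneg_right hnM hr0.le
    · calc srep (cls x) ≤ n * x := h2
        _ ≤ M * x := mul_le_mul_of_nonneg_right hnM hx.le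
  apply gap_violation f (1/(M*M)) (by positivity) ?_ ?_ ?_ hldp
  · intro x hx
    obtain ⟨hr0, h1, h2⟩ := hrep x hx
    rw [hfpos x hx]
    constructor
    · have e1 : 1/(M*M) * x = x/(M*M) := by ring
      rw [e1, div_le_div_iff₀ (by positivity) hM0]
      nlinarith [mul_le_mul_of_nonneg_right h1 hM0.le]
    · rw [div_le_iff₀ hM0]
      calc srep (cls x) ≤ M * x := h2
        _ = x * M := by ring
  · intro x hx
    rw [hf]; simp [not_lt.2 hx]
  · intro x hx
    rcases hx.lt_or_gt with hneg | hpos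
    · filter_upwards [Iio_mem_nhds hneg] with y hy
      rw [hf]; simp [not_lt.2 (le_of_lt hy), not_lt.2 (le_of_lt hneg)]
    · have hmem : Set.Ioo (x/2) (2*x) ∈ 𝓝 x :=
        Ioo_mem_nhds (by linarith) (by linarith)
      filter_upwards [hmem] with y hy
      have hy0 : 0 < y := lt_trans (by linarith) hy.1
      have hycls : y ∈ cls x := by
        refine ⟨hy0, 2, ?_, ?_⟩ <;> push_cast <;> [linarith [hy.1]; linarith [hy.2]]
      rw [hfpos y hy0, hfpos x hpos, cls_eq hycls]

end CaseBounded
section CaseUnbounded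

variable {F : Type*} [Field F] [LinearOrder F] [IsStrictOrderedRing F] [TopologicalSpace F] [OrderTopology F]

lemma case_unbounded (A : Set F) (hne : A.Nonempty) (hbdd : BddAbove A)
    (hno : ∀ t : F, ¬ IsLUB A t) (hnat : ∀ M : F, ∃ n : ℕ, M < n)
    (hldp : ∀ (f f' : F → F) (a L : F), ContinuousAt f a →
      (∃ U ∈ 𝓝 a, ∀ x ∈ U, x ≠ a → HasDerivO f (f' x) x) →
      Tendsto f' (𝓝[≠] a) (𝓝 L) → HasDerivO f L a) : False := by
  classical
  obtain ⟨a₀, ha₀⟩ := hne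
  obtain ⟨q₀, hq₀⟩ := hbdd
  set s : F := 1 - (a₀ - 1) with hs
  set Ub : Set F := {y | y - s ∈ upperBounds A} with hUb
  have hmem : ∀ y : F, y ∈ Ub ↔ y - s ∈ upperBounds A := fun y => Iff.rfl
  set q : F := q₀ + s with hqdef
  have h1 : (1:F) ∉ Ub := by
    intro h
    have h' : a₀ ≤ 1 - s := h ha₀
    rw [hs] at h'; linarith
  have hq : q ∈ Ub := by
    rw [hmem, hqdef, add_sub_cancel_right]; exact hq₀
  have hmono : ∀ {y z : F}, y ∈ Ub → y ≤ z → z ∈ Ub := by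
    intro y z hy hyz
    rw [hmem] at hy ⊢
    intro b hb
    exact le_trans (hy hb) (by linarith)
  have hsep : ∀ {y z : F}, y ∉ Ub → z ∈ Ub → y < z := by
    intro y z hy hz
    by_contra hle
    exact hy (hmono hz (not_lt.1 hle))
  have hq1 : (1:F) < q := hsep h1 hq
  have hq0 : (0:F) < q := lt_trans one_pos hq1
  have hUopen : ∀ z ∈ Ub, ∃ z' < z, z' ∈ Ub := by
    intro z hz
    by_contra hcon
    push_neg at hcon
    apply hno (z - s)
    constructor
    · exact (hmem z).1 hz
    · intro y hy
      by_contra hyz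
      push_neg at hyz
      refine hcon (y + s) (by linarith) ?_
      rw [hmem, add_sub_cancel_right]; exact hy
  have hLopen : ∀ y, y ∉ Ub → ∃ w, y < w ∧ ∀ v < w, v ∉ Ub := by
    intro y hy
    rw [hmem, upperBounds, Set.mem_setOf_eq] at hy
    push_neg at hy
    obtain ⟨a, ha, hya⟩ := hy
    refine ⟨a + s, by linarith, ?_⟩
    intro v hv hvUb
    have := (hmem v).1 hvUb ha
    linarith
  have h2pos : ∀ k : ℤ, (0:F) < 2 ^ k := fun k => zpow_pos (by norm_num) k
  have h2mono : ∀ {j k : ℤ}, j ≤ k → (2:F) ^ j ≤ 2 ^ k := fun h =>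
    zpow_le_zpow_right₀ one_le_two h
  have hdown : ∀ (x : F) {j k : ℤ}, 0 < x → j ≤ k → x / 2 ^ k ∈ Ub → x / 2 ^ j ∈ Ub := by
    intro x j k hx hjk hk
    refine hmono hk ?_
    exact div_le_div_of_nonneg_left hx.le (h2pos j) (h2mono hjk)
  have hex : ∀ x : F, 0 < x → ∃! k : ℤ, x / 2 ^ k ∈ Ub ∧ x / 2 ^ (k+1) ∉ Ub := by
    intro x hx
    obtain ⟨n₁, hn₁⟩ := hnat x
    obtain ⟨n₂, hn₂⟩ := hnat (q / x)
    have hS1 : x / 2 ^ (n₁:ℤ) ∉ Ub := fun h => h1 (hmono h (by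
      rw [div_le_one (h2pos _)]
      calc x ≤ (n₁:F) := hn₁.le
        _ ≤ 2 ^ (n₁:ℤ) := by
          rw [zpow_natCast]
          exact_mod_cast (Nat.lt_two_pow_self (n := n₁)).le))
    have hS2 : x / 2 ^ (-(n₂:ℤ)) ∈ Ub := by
      refine hmono hq ?_
      have e : x / ((2:F) ^ (-(n₂:ℤ))) = x * 2 ^ (n₂:ℕ) := by
        rw [zpow_neg, zpow_natCast]
        field_simp
      rw [e]
      calc q = (q/x) * x := by field_simp
        _ ≤ (n₂:F) * x := mul_le_mul_of_nonneg_right hn₂.le hx.le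
        _ ≤ 2^n₂ * x := by
            refine mul_le_mul_of_nonneg_right ?_ hx.le
            exact_mod_cast (Nat.lt_two_pow_self (n := n₂)).le
        _ = x * 2^n₂ := by ring
    have hbd : ∀ z : ℤ, x / 2 ^ z ∈ Ub → z ≤ (n₁:ℤ) := by
      intro z hz
      by_contra hzn
      push_neg at hzn
      exact hS1 (hdown x hx hzn.le hz)
    obtain ⟨k, hkS, hkmax⟩ := Int.exists_greatest_of_bdd ⟨(n₁:ℤ), hbd⟩ ⟨-(n₂:ℤ), hS2⟩
    refine ⟨k, ⟨hkS, ?_⟩, ?_⟩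
    · intro hk1
      have := hkmax _ hk1
      omega
    · rintro j ⟨hj1, hj2⟩
      have hjk : j ≤ k := hkmax _ hj1
      rcases eq_or_lt_of_le hjk with heq | hlt
      · exact heq
      · exact (hj2 (hdown x hx (by omega) hkS)).elim
  set f : F → F := fun x => if h : 0 < x then (2:F) ^ (hex x h).choose else 0 with hfdef
  have hfpos : ∀ (x : F) (hx : 0 < x), f x = 2 ^ (hex x hx).choose := by
    intro x hx; exact dif_pos hx
  apply gap_violation f (1/(2*q)) (by positivity) ?_ ?_ ?_ hldp
  · -- bounds
    intro x hx
    set k := (hex x hx).choose with hk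
    obtain ⟨⟨hin, hout⟩, -⟩ := (hex x hx).choose_spec
    have hkx : (2:F) ^ k < x := (one_lt_div (h2pos k)).1 (hsep h1 hin)
    have hxk : x < q * 2 ^ (k+1) := (div_lt_iff₀ (h2pos _)).1 (hsep hout hq)
    rw [hfpos x hx, ← hk]
    constructor
    · have e1 : 1/(2*q) * x = x / (2*q) := by ring
      rw [e1, div_le_iff₀ (by positivity)]
      calc x ≤ q * 2 ^ (k+1) := hxk.le
        _ = q * (2^k * 2) := by rw [zpow_add_one₀ (two_ne_zero)]
        _ = 2^k * (2*q) := by ring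
    · exact hkx.le
  · intro x hx
    show dite _ _ _ = (0:F)
    exact dif_neg (not_lt.2 hx)
  · -- local constancy
    intro x hx
    rcases hx.lt_or_gt with hneg | hpos
    · filter_upwards [Iio_mem_nhds hneg] with y hy
      show dite _ _ _ = dite _ _ _
      rw [dif_neg (not_lt.2 hy.le), dif_neg (not_lt.2 hneg.le)]
    · set k := (hex x hpos).choose with hk
      obtain ⟨⟨hin, hout⟩, -⟩ := (hex x hpos).choose_spec
      obtain ⟨z', hz'lt, hz'Ub⟩ := hUopen _ hin
      obtain ⟨w, hwgt, hwnot⟩ := hLopen _ hout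
      have hz'pos : (0:F) < z' := lt_trans one_pos (hsep h1 hz'Ub)
      have hxW : x ∈ Set.Ioo (z' * 2^k) (w * 2^(k+1)) := by
        constructor
        · exact (lt_div_iff₀ (h2pos k)).1 hz'lt
        · exact (div_lt_iff₀ (h2pos _)).1 hwgt
      filter_upwards [Ioo_mem_nhds hxW.1 hxW.2] with y hy
      have hy0 : (0:F) < y := lt_trans (by positivity) hy.1
      have hyP : y / 2 ^ k ∈ Ub ∧ y / 2 ^ (k+1) ∉ Ub := by
        constructor
        · exact hmono hz'Ub ((le_div_iff₀ (h2pos k)).2 hy.1.le)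
        · exact hwnot _ ((div_lt_iff₀ (h2pos _)).2 hy.2)
      have heq : k = (hex y hy0).choose := (hex y hy0).choose_spec.2 k hyP
      rw [hfpos y hy0, hfpos x hpos, ← hk, ← heq]

end CaseUnbounded
section Transport

variable {F : Type*} [Field F] [LinearOrder F] [IsStrictOrderedRing F] [TopologicalSpace F] [OrderTopology F]

omit [Field F] [LinearOrder F] [IsStrictOrderedRing F] [OrderTopology F] in
lemma tendsto_punctured_transport (h : F ≃ₜ ℝ) (u : F → F) (x l : F) :
    Tendsto u (𝓝[≠] x) (𝓝 l) ↔
      Tendsto (fun y => h (u (h.symm y))) (𝓝[≠] (h x)) (𝓝 (h l)) := by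
  rw [← h.map_punctured_nhds_eq x, tendsto_map'_iff]
  have hcomp : (fun y => h (u (h.symm y))) ∘ h = fun z => h (u z) := by
    funext z; simp
  rw [hcomp]
  constructor
  · intro H
    exact (h.continuous.tendsto l).comp H
  · intro H
    have := (h.symm.continuous.tendsto (h l)).comp H
    simp only [Function.comp_def, Homeomorph.symm_apply_apply] at this
    exact this

end Transport

/-- an ordered field satisfies the least upper bound property iff it
satisfies the Limit of Derivatives Property. -/
theorem stmt_15 {F : Type*} [Field F] [LinearOrder F] [IsStrictOrderedRing F] [TopologicalSpace F] [OrderTopology F] :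
    (∀ A : Set F, A.Nonempty → BddAbove A → ∃ s, IsLUB A s) ↔
    (∀ (f f' : F → F) (a L : F), ContinuousAt f a →
      (∃ U ∈ 𝓝 a, ∀ x ∈ U, x ≠ a → HasDerivO f (f' x) x) →
      Tendsto f' (𝓝[≠] a) (𝓝 L) → HasDerivO f L a) := by
  constructor
  · -- LUB → LDP
    intro hlub f f' a L hcont hdiff htend
    classical
    letI supF : SupSet F := ⟨fun A => if h : A.Nonempty ∧ BddAbove A then (hlub A h.1 h.2).choose else 0⟩
    have hsupz : ∀ X : Set F, ¬(X.Nonempty ∧ BddAbove X) → sSup X = 0 := fun X hX => dif_neg hX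
    have hsup : ∀ X : Set F, BddAbove X → X.Nonempty → IsLUB X (sSup X) := by
      intro X hb hn
      have : sSup X = (hlub X hn hb).choose := dif_pos ⟨hn, hb⟩
      rw [this]
      exact (hlub X hn hb).choose_spec
    letI ccl : ConditionallyCompleteLattice F := conditionallyCompleteLatticeOfLatticeOfsSup F hsup
    letI cclo : ConditionallyCompleteLinearOrder F :=
      { ccl, (inferInstance : LinearOrder F) with
        csSup_of_not_bddAbove := by
          intro X hX
          rw [hsupz X (fun hh => hX hh.2), hsupz ∅ (fun hh => (Set.not_nonempty_empty hh.1))]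
        csInf_of_not_bddBelow := by
          intro X hX
          show sSup (lowerBounds X) = sSup (lowerBounds (∅ : Set F))
          have hlb : lowerBounds X = (∅ : Set F) := Set.not_nonempty_iff_eq_empty.1 hX
          have huniv : lowerBounds (∅ : Set F) = Set.univ := lowerBounds_empty
          rw [hlb, huniv]
          rw [hsupz ∅ (fun hh => (Set.not_nonempty_empty hh.1)),
            hsupz Set.univ (fun hh => not_bddAbove_univ hh.2)] }
    letI : ConditionallyCompleteLinearOrder F :=
      cclo
    let e := ConditionallyCompleteLinearOrderedField.inducedOrderRingIso F ℝ
    let h : F ≃ₜ ℝ := e.toOrderIso.toHomeomorph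
    have hfun : ∀ x : F, h x = e x := fun _ => rfl
    set g : ℝ → ℝ := fun y => h (f (h.symm y)) with hg
    set g' : ℝ → ℝ := fun y => h (f' (h.symm y)) with hg'
    have key : ∀ (u : F → F) (x l : F), Tendsto u (𝓝[≠] x) (𝓝 l) ↔
        Tendsto (fun y => h (u (h.symm y))) (𝓝[≠] (h x)) (𝓝 (h l)) :=
      tendsto_punctured_transport h
    have hquot : ∀ x : F, (fun y : ℝ => h ((f (h.symm y) - f x) / (h.symm y - x)))
        = fun y : ℝ => (g y - g (h x)) / (y - h x) := by
      intro x; funext y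
      have e1 : h ((f (h.symm y) - f x) / (h.symm y - x))
          = (h (f (h.symm y)) - h (f x)) / (h (h.symm y) - h x) := by
        show e _ = (e _ - e _) / (e _ - e _)
        rw [map_div₀, map_sub, map_sub]
      rw [e1, h.apply_symm_apply]
      have e2 : g (h x) = h (f x) := by rw [hg]; simp
      rw [e2]
    show Tendsto (fun x => (f x - f a) / (x - a)) (𝓝[≠] a) (𝓝 L)
    rw [key _ a L, hquot a]
    apply real_ldp g g' (h a) (h L)
    · have : ContinuousAt (fun y : ℝ => h (f (h.symm y))) (h a) := by
        apply (h.continuous.continuousAt).comp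
        apply ContinuousAt.comp ?_ (h.symm.continuous.continuousAt)
        rw [h.symm_apply_apply]
        exact hcont
      exact this
    · obtain ⟨U, hU, hder⟩ := hdiff
      refine ⟨h '' U, ?_, ?_⟩
      · rw [← h.map_nhds_eq a]
        exact image_mem_map hU
      · rintro y ⟨x, hxU, rfl⟩ hyne
        have hxa : x ≠ a := fun hh => hyne (by rw [hh])
        have hT := (key (fun z => (f z - f x) / (z - x)) x (f' x)).1 (hder x hxU hxa)
        rw [hquot x] at hT
        rw [hasDerivAt_iff_tendsto_slope]
        have hgx : g' (h x) = h (f' x) := by rw [hg']; simp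
        rw [hgx]
        have : slope g (h x) = fun z : ℝ => (g z - g (h x)) / (z - h x) := by
          funext z; rw [slope_def_field]
        rw [this]
        exact hT
    · exact (key f' a L).1 htend
  · -- LDP → LUB
    intro hldp A hne hbdd
    by_contra hno
    push_neg at hno
    by_cases hN : ∃ M : F, ∀ n : ℕ, (n:F) ≤ M
    · obtain ⟨M, hM⟩ := hN
      exact (case_bounded M hM hldp).elim
    · push_neg at hN
      exact (case_unbounded A hne hbdd (fun t => hno t) (fun M => hN M) hldp).elim
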